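/- For x,y ∈ [0,∞) with x ≠ y, the series ∑_{I ∈ 𝒟⁺} |h_I(y)| · |h_{I⁻}(x) − h_{I⁺}(x)| converges, and its sum is at most 4√2 / δ(x,y). -/

import Mathlib

open MeasureTheory Set

/-- The standard dyadic interval `[k·2^{-j}, (k+1)·2^{-j})` contained in `[0,∞)`. -/
def dyadicI (j : ℤ) (k : ℕ) : Set ℝ :=
  Set.Ico ((k : ℝ) * (2:ℝ) ^ (-j)) (((k : ℝ) + 1) * (2:ℝ) ^ (-j))

/-- The dyadic ultrametric on `[0,∞)`: the infimum of the lengths of the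
dyadic intervals containing both points. -/
noncomputable def delta (x y : ℝ) : ℝ :=
  if x = y then 0
  else sInf {L : ℝ | ∃ j : ℤ, ∃ k : ℕ, L = (2:ℝ) ^ (-j) ∧ x ∈ dyadicI j k ∧ y ∈ dyadicI j k}

/-- The Haar function of the dyadic interval `dyadicI j k`. -/
noncomputable def haar (j : ℤ) (k : ℕ) (t : ℝ) : ℝ :=
  Real.sqrt ((2:ℝ) ^ j) *
    ((dyadicI (j+1) (2*k)).indicator (fun _ => (1:ℝ)) t
      - (dyadicI (j+1) (2*k+1)).indicator (fun _ => (1:ℝ)) t)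

/-- Petermichl's kernel on `[0,∞)`. -/
noncomputable def Pker (x y : ℝ) : ℝ :=
  ∑' p : ℤ × ℕ,
    haar p.1 p.2 y * (haar (p.1+1) (2*p.2) x - haar (p.1+1) (2*p.2+1) x)

/-- The elementary building block `Ω_J` associated with the dyadic interval `J = dyadicI j k`. -/
noncomputable def Omega (j : ℤ) (k : ℕ) (x y : ℝ) : ℝ :=
  ((dyadicI (j+1) (2*k)).indicator (fun _ => (1:ℝ)) y
    - (dyadicI (j+1) (2*k+1)).indicator (fun _ => (1:ℝ)) y) *
  (((dyadicI (j+2) (4*k+1)).indicator (fun _ => (1:ℝ)) x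
      + (dyadicI (j+2) (4*k+2)).indicator (fun _ => (1:ℝ)) x)
    - ((dyadicI (j+2) (4*k)).indicator (fun _ => (1:ℝ)) x
      + (dyadicI (j+2) (4*k+3)).indicator (fun _ => (1:ℝ)) x))

/-- The scale truncation `P^{l,m}` of Petermichl's kernel: only the dyadic
intervals with `2^l ≤ |I| < 2^m` are kept. -/
noncomputable def PkerScale (l m : ℤ) (x y : ℝ) : ℝ :=
  ∑' p : ℤ × ℕ,
    if (2:ℝ) ^ l ≤ (2:ℝ) ^ (-p.1) ∧ (2:ℝ) ^ (-p.1) < (2:ℝ) ^ m then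
      haar p.1 p.2 y * (haar (p.1+1) (2*p.2) x - haar (p.1+1) (2*p.2+1) x)
    else 0

/-- The metric truncation `P_{l,m}` of Petermichl's kernel. -/
noncomputable def PkerMetric (l m : ℤ) (x y : ℝ) : ℝ :=
  if (2:ℝ) ^ l ≤ delta x y ∧ delta x y < (2:ℝ) ^ m then Pker x y else 0


lemma two_zpow_pos (j : ℤ) : (0:ℝ) < 2 ^ j := zpow_pos (by norm_num) j

lemma mem_dyadicI {j : ℤ} {k : ℕ} {t : ℝ} :
    t ∈ dyadicI j k ↔ 0 ≤ t ∧ k = ⌊t * 2 ^ j⌋₊ := by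
  have h2 : (0:ℝ) < 2 ^ j := two_zpow_pos j
  unfold dyadicI
  rw [Set.mem_Ico, zpow_neg, ← div_eq_mul_inv, ← div_eq_mul_inv, div_le_iff₀ h2, lt_div_iff₀ h2]
  constructor
  · rintro ⟨h1, h3⟩
    have ht : 0 ≤ t := by nlinarith [Nat.cast_nonneg (α := ℝ) k]
    refine ⟨ht, ?_⟩
    symm
    rw [Nat.floor_eq_iff (by positivity)]
    exact ⟨h1, h3⟩
  · rintro ⟨ht, rfl⟩
    exact ⟨Nat.floor_le (by positivity), Nat.lt_floor_add_one _⟩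

lemma dyadicI_disj {j : ℤ} {k k' : ℕ} {t : ℝ} (h : t ∈ dyadicI j k) (h' : t ∈ dyadicI j k') :
    k = k' := by
  rw [mem_dyadicI] at h h'
  rw [h.2, h'.2]

lemma dyadic_child_subset {j : ℤ} {k : ℕ} {m : ℕ} (hm : m = 2*k ∨ m = 2*k+1) :
    dyadicI (j+1) m ⊆ dyadicI j k := by
  intro t ht
  rw [mem_dyadicI] at ht ⊢
  refine ⟨ht.1, ?_⟩
  have key : ⌊t * 2 ^ j⌋₊ = ⌊t * 2 ^ (j+1)⌋₊ / 2 := by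
    have h1 : t * 2 ^ j = t * 2 ^ (j+1) / (2:ℕ) := by
      push_cast
      rw [zpow_add_one₀ (two_ne_zero)]
      ring
    rw [h1, Nat.floor_div_natCast]
  rw [key, ← ht.2]
  rcases hm with rfl | rfl <;> omega

lemma haar_eq_zero {j : ℤ} {k : ℕ} {t : ℝ} (h : t ∉ dyadicI j k) : haar j k t = 0 := by
  unfold haar
  rw [Set.indicator_of_notMem (fun hc => h (dyadic_child_subset (Or.inl rfl) hc)),
    Set.indicator_of_notMem (fun hc => h (dyadic_child_subset (Or.inr rfl) hc))]
  ring

lemma abs_haar_le (j : ℤ) (k : ℕ) (t : ℝ) : |haar j k t| ≤ Real.sqrt ((2:ℝ) ^ j) := by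
  unfold haar
  rw [abs_mul, abs_of_nonneg (Real.sqrt_nonneg _)]
  have h1 : ∀ (s : Set ℝ), (0:ℝ) ≤ s.indicator (fun _ => (1:ℝ)) t ∧
      s.indicator (fun _ => (1:ℝ)) t ≤ 1 := by
    intro s
    unfold Set.indicator
    split <;> norm_num
  obtain ⟨a1, a2⟩ := h1 (dyadicI (j+1) (2*k))
  obtain ⟨b1, b2⟩ := h1 (dyadicI (j+1) (2*k+1))
  have : |(dyadicI (j+1) (2*k)).indicator (fun _ => (1:ℝ)) t
      - (dyadicI (j+1) (2*k+1)).indicator (fun _ => (1:ℝ)) t| ≤ 1 := by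
    rw [abs_sub_le_iff]; constructor <;> linarith
  nlinarith [Real.sqrt_nonneg ((2:ℝ)^j)]

lemma haar_diff_bound (j : ℤ) (k : ℕ) (x : ℝ) :
    |haar (j+1) (2*k) x - haar (j+1) (2*k+1) x| ≤ Real.sqrt ((2:ℝ) ^ (j+1)) := by
  by_cases hx : x ∈ dyadicI (j+1) (2*k)
  · have hx' : x ∉ dyadicI (j+1) (2*k+1) := fun hc => by
      have := dyadicI_disj hx hc; omega
    rw [haar_eq_zero hx', sub_zero]
    exact abs_haar_le _ _ _
  · rw [haar_eq_zero hx, zero_sub, abs_neg]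
    exact abs_haar_le _ _ _

/-- For `x ≠ y` in `[0,∞)`, the series `∑_{I ∈ 𝒟⁺} |h_I(y)|·|h_{I⁻}(x) − h_{I⁺}(x)|`
converges and its sum is at most `4√2/δ(x,y)`. -/
theorem Pker_series_abs_convergent (x y : ℝ) (hx : 0 ≤ x) (hy : 0 ≤ y) (hxy : x ≠ y) :
    Summable (fun p : ℤ × ℕ =>
      |haar p.1 p.2 y| * |haar (p.1+1) (2*p.2) x - haar (p.1+1) (2*p.2+1) x|) ∧
    (∑' p : ℤ × ℕ,
      |haar p.1 p.2 y| * |haar (p.1+1) (2*p.2) x - haar (p.1+1) (2*p.2+1) x|)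
      ≤ 4 * Real.sqrt 2 / delta x y := by
  set f : ℤ × ℕ → ℝ := fun p =>
    |haar p.1 p.2 y| * |haar (p.1+1) (2*p.2) x - haar (p.1+1) (2*p.2+1) x| with hfdef
  set S : Set ℤ := {j | ⌊x * 2^j⌋₊ = ⌊y * 2^j⌋₊} with hSdef
  -- S is nonempty
  have hSne : S.Nonempty := by
    obtain ⟨n, hn⟩ := pow_unbounded_of_one_lt (max x y) (one_lt_two (α := ℝ))
    refine ⟨-(n:ℤ), ?_⟩
    have h2n : (0:ℝ) < 2 ^ (n:ℤ) := two_zpow_pos _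
    have hxn : x * 2 ^ (-(n:ℤ)) < 1 := by
      rw [zpow_neg, ← div_eq_mul_inv, div_lt_one h2n, zpow_natCast]
      exact lt_of_le_of_lt (le_max_left x y) hn
    have hyn : y * 2 ^ (-(n:ℤ)) < 1 := by
      rw [zpow_neg, ← div_eq_mul_inv, div_lt_one h2n, zpow_natCast]
      exact lt_of_le_of_lt (le_max_right x y) hn
    show ⌊x * 2^(-(n:ℤ))⌋₊ = ⌊y * 2^(-(n:ℤ))⌋₊
    rw [Nat.floor_eq_zero.2 hxn, Nat.floor_eq_zero.2 hyn]
  -- key estimate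
  have hkey : ∀ j ∈ S, |x - y| < 2 ^ (-j) := by
    intro j hj
    have hj' : ⌊x * 2^j⌋₊ = ⌊y * 2^j⌋₊ := hj
    have h2j : (0:ℝ) < 2 ^ j := two_zpow_pos j
    have hfx := Nat.floor_le (mul_nonneg hx h2j.le)
    have hfx' := Nat.lt_floor_add_one (x * 2^j)
    have hfy := Nat.floor_le (mul_nonneg hy h2j.le)
    have hfy' := Nat.lt_floor_add_one (y * 2^j)
    rw [hj'] at hfx hfx'
    rw [abs_sub_lt_iff]
    constructor <;>
    · rw [zpow_neg, ← one_div, lt_div_iff₀ h2j]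
      nlinarith
  -- S bounded above
  have hxy0 : (0:ℝ) < |x - y| := abs_pos.2 (sub_ne_zero.2 hxy)
  have hSbdd : BddAbove S := by
    obtain ⟨n, hn⟩ := exists_pow_lt_of_lt_one hxy0 (by norm_num : (1/2:ℝ) < 1)
    refine ⟨n, fun j hj => ?_⟩
    by_contra hlt
    push_neg at hlt
    have h1 := hkey j hj
    have h2 : (2:ℝ)^(-j) ≤ (2:ℝ)^(-(n:ℤ)) := by
      apply zpow_le_zpow_right₀ one_le_two
      omega
    have h3 : ((2:ℝ)^(-(n:ℤ))) = (1/2:ℝ)^n := by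
      rw [zpow_neg, zpow_natCast, one_div, inv_pow]
    linarith
  set j0 : ℤ := sSup S with hj0def
  have hj0 : j0 ∈ S := Int.csSup_mem hSne hSbdd
  -- delta facts
  set T := {L : ℝ | ∃ j : ℤ, ∃ k : ℕ, L = (2:ℝ) ^ (-j) ∧ x ∈ dyadicI j k ∧ y ∈ dyadicI j k}
    with hTdef
  have hd : delta x y = sInf T := by unfold delta; rw [if_neg hxy]
  have hmemT : ∀ j ∈ S, (2:ℝ)^(-j) ∈ T := by
    intro j hj
    exact ⟨j, ⌊x * 2^j⌋₊, rfl, mem_dyadicI.2 ⟨hx, rfl⟩, mem_dyadicI.2 ⟨hy, hj⟩⟩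
  have hTlb : ∀ L ∈ T, |x - y| ≤ L := by
    rintro L ⟨j, k, rfl, hxm, hym⟩
    rw [mem_dyadicI] at hxm hym
    have hjS : j ∈ S := by
      show ⌊x * 2^j⌋₊ = ⌊y * 2^j⌋₊
      omega
    exact (hkey j hjS).le
  have hdpos : 0 < delta x y := by
    rw [hd]
    exact lt_of_lt_of_le hxy0 (le_csInf ⟨_, hmemT j0 hj0⟩ hTlb)
  have hdle : delta x y ≤ 2 ^ (-j0) := by
    rw [hd]
    exact csInf_le ⟨0, fun L hL => le_trans hxy0.le (hTlb L hL)⟩ (hmemT j0 hj0)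
  -- support of f
  have hfnn : ∀ p, 0 ≤ f p := fun p => mul_nonneg (abs_nonneg _) (abs_nonneg _)
  have hsupport : ∀ p : ℤ × ℕ, f p ≠ 0 → p.2 = ⌊y * 2^p.1⌋₊ ∧ p.1 ≤ j0 := by
    rintro ⟨j, k⟩ hne
    have hy' : y ∈ dyadicI j k := by
      by_contra hc
      exact hne (by simp [hfdef, haar_eq_zero hc])
    have hx' : x ∈ dyadicI j k := by
      by_contra hc
      have h1 : haar (j+1) (2*k) x = 0 :=
        haar_eq_zero (fun hm => hc (dyadic_child_subset (Or.inl rfl) hm))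
      have h2 : haar (j+1) (2*k+1) x = 0 :=
        haar_eq_zero (fun hm => hc (dyadic_child_subset (Or.inr rfl) hm))
      exact hne (by simp [hfdef, h1, h2])
    rw [mem_dyadicI] at hx' hy'
    have hjS : j ∈ S := by
      show ⌊x * 2^j⌋₊ = ⌊y * 2^j⌋₊
      omega
    exact ⟨hy'.2, le_csSup hSbdd hjS⟩
  set g : ℤ × ℕ → ℝ := fun p =>
    if p.2 = ⌊y * 2^p.1⌋₊ ∧ p.1 ≤ j0 then Real.sqrt 2 * 2^p.1 else 0 with hgdef
  have hgnn : ∀ p, 0 ≤ g p := by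
    intro p
    simp only [hgdef]
    split
    · positivity
    · exact le_rfl
  have hfg : ∀ p, f p ≤ g p := by
    intro p
    by_cases hp : f p = 0
    · rw [hp]; exact hgnn p
    · obtain ⟨h1, h2⟩ := hsupport p hp
      have hgp : g p = Real.sqrt 2 * 2^p.1 := by
        simp only [hgdef]
        exact if_pos ⟨h1, h2⟩
      rw [hgp]
      calc f p ≤ Real.sqrt ((2:ℝ)^p.1) * Real.sqrt ((2:ℝ)^(p.1+1)) :=
            mul_le_mul (abs_haar_le _ _ _) (haar_diff_bound _ _ _) (abs_nonneg _)
              (Real.sqrt_nonneg _)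
        _ = Real.sqrt 2 * 2^p.1 := by
            rw [← Real.sqrt_mul (two_zpow_pos p.1).le]
            have : (2:ℝ)^p.1 * 2^(p.1+1) = 2 * ((2:ℝ)^p.1)^2 := by
              rw [zpow_add_one₀ (two_ne_zero)]; ring
            rw [this, Real.sqrt_mul (by norm_num), Real.sqrt_sq (two_zpow_pos p.1).le]
  -- summability of g via geometric series
  set e : ℕ → ℤ × ℕ := fun n => (j0 - n, ⌊y * 2^((j0:ℤ) - n)⌋₊) with hedef
  have hinj : Function.Injective e := by
    intro a b h
    have h1 : j0 - (a:ℤ) = j0 - (b:ℤ) := congrArg Prod.fst h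
    omega
  have hge : ∀ n, g (e n) = Real.sqrt 2 * 2^(j0:ℤ) * (1/2:ℝ)^n := by
    intro n
    have hcond : (e n).2 = ⌊y * 2^(e n).1⌋₊ ∧ (e n).1 ≤ j0 := by
      refine ⟨rfl, ?_⟩
      show j0 - (n:ℤ) ≤ j0
      omega
    simp only [hgdef, if_pos hcond]
    have h3 : (2:ℝ)^((e n).1) = 2^(j0:ℤ) * (1/2)^n := by
      show (2:ℝ)^((j0:ℤ) - n) = 2^(j0:ℤ) * (1/2)^n
      rw [zpow_sub₀ (two_ne_zero), zpow_natCast, div_eq_mul_inv, one_div, inv_pow]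
    rw [h3]; ring
  have hgsupp : ∀ p ∉ Set.range e, g p = 0 := by
    intro p hp
    simp only [hgdef]
    apply if_neg
    rintro ⟨h1, h2⟩
    apply hp
    refine ⟨(j0 - p.1).toNat, ?_⟩
    have hc : ((j0 - p.1).toNat : ℤ) = j0 - p.1 := Int.toNat_of_nonneg (by omega)
    simp only [hedef, hc, sub_sub_cancel]
    exact Prod.ext rfl h1.symm
  have hgeom : Summable (fun n : ℕ => Real.sqrt 2 * 2^(j0:ℤ) * (1/2:ℝ)^n) :=
    (summable_geometric_of_lt_one (by norm_num) (by norm_num)).mul_left _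
  have hgs : Summable g :=
    (hinj.summable_iff hgsupp).1 (hgeom.congr (fun n => (hge n).symm))
  have hsumf : Summable f := Summable.of_nonneg_of_le hfnn hfg hgs
  refine ⟨hsumf, ?_⟩
  have htg : ∑' p, g p = Real.sqrt 2 * 2^(j0:ℤ) * 2 := by
    rw [← hinj.tsum_eq (fun p hp => by
      by_contra hc
      exact hp (hgsupp p hc))]
    rw [tsum_congr hge, tsum_mul_left, tsum_geometric_of_lt_one (by norm_num) (by norm_num)]
    norm_num
  have hle1 : ∑' p, f p ≤ ∑' p, g p := hsumf.tsum_le_tsum hfg hgs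
  have h2 : Real.sqrt 2 * 2^(j0:ℤ) * 2 ≤ 4 * Real.sqrt 2 / (2:ℝ)^(-j0) := by
    have he : 4 * Real.sqrt 2 / (2:ℝ)^(-j0) = 4 * Real.sqrt 2 * 2^j0 := by
      rw [zpow_neg]
      field_simp
    rw [he]
    nlinarith [Real.sqrt_nonneg 2, two_zpow_pos j0]
  have h1 : 4 * Real.sqrt 2 / (2:ℝ)^(-j0) ≤ 4 * Real.sqrt 2 / delta x y := by
    exact div_le_div_of_nonneg_left (by positivity) hdpos hdle
  calc ∑' p, f p ≤ ∑' p, g p := hle1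
    _ = Real.sqrt 2 * 2^(j0:ℤ) * 2 := htg
    _ ≤ 4 * Real.sqrt 2 / (2:ℝ)^(-j0) := h2
    _ ≤ 4 * Real.sqrt 2 / delta x y := h1
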